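/- Correctness of the path-join local-sensitivity algorithm: for a path join query under bag semantics, define the local sensitivity LS as the maximum over all i ∈ {1,…,m} and all pairs (b,c) ∈ Σ_{i-1} × Σ_i of max(δ⁺(b,c,i), δ⁻(b,c,i)), where δ⁺(b,c,i) is the increase of the output count caused by incrementing M_i b c by 1 and δ⁻(b,c,i) is the decrease caused by decrementing M_i b c by 1 when M_i b c ≥ 1 (and 0 when M_i b c = 0). Then LS = max_{1 ≤ i ≤ m} (max_{b ∈ Σ_{i-1}} In_i(b)) · (max_{c ∈ Σ_i} Out_i(c)). -/

import Mathlib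

open Finset

/-- The output count (under bag semantics) of the path join query
`Q(A_0,…,A_m) :- R_1(A_0,A_1), …, R_m(A_{m-1},A_m)`, where `D i` is the domain `Σ_i`
and `M i a b` is the multiplicity of the tuple `(a,b)` in relation `R_{i+1}`. -/
def Qcount (m : ℕ) (D : ℕ → Type) [∀ i, Fintype (D i)]
    (M : (i : ℕ) → D i → D (i + 1) → ℕ) : ℕ :=
  ∑ a : (∀ j : Fin (m + 1), D j), ∏ i : Fin m, M i.val (a i.castSucc) (a i.succ)

/-- `InFn D M i b` is the "topjoin" quantity `In_{i+1}(b)` (1-based paper indexing):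
the number of partial join paths `(a_0,…,a_{i-1},b)` through relations `R_1,…,R_i`,
i.e. `Σ_{(a_0,…,a_{i-1})} ∏_{j<i} M j a_j a_{j+1}` evaluated with `a_i = b`. -/
def InFn (D : ℕ → Type) [∀ i, Fintype (D i)]
    (M : (i : ℕ) → D i → D (i + 1) → ℕ) (i : ℕ) (b : D i) : ℕ :=
  ∑ a : (∀ j : Fin i, D j), ∏ j : Fin i,
    M j.val (Fin.snoc (α := fun t : Fin (i + 1) => D t.val) a b j.castSucc)
      (Fin.snoc (α := fun t : Fin (i + 1) => D t.val) a b j.succ)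

/-- `OutFn D M i k c` is the "botjoin" quantity: the number of partial join paths
`(c, a_{i+1}, …, a_{i+k})` through the `k` relations `M i, M (i+1), …, M (i+k-1)`,
i.e. `Σ_{(a_{i+1},…,a_{i+k})} ∏_{j<k} M (i+j) a_{i+j} a_{i+j+1}` evaluated with `a_i = c`. -/
def OutFn (D : ℕ → Type) [∀ i, Fintype (D i)]
    (M : (i : ℕ) → D i → D (i + 1) → ℕ) (i k : ℕ) (c : D i) : ℕ :=
  ∑ b : (∀ j : Fin k, D (i + j.val + 1)), ∏ j : Fin k,
    M (i + j.val) (Fin.cons (α := fun t : Fin (k + 1) => D (i + t.val)) c b j.castSucc)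
      (Fin.cons (α := fun t : Fin (k + 1) => D (i + t.val)) c b j.succ)

/-- Insert one copy of the tuple `(b,c)` into relation `i` (0-based). -/
def bumpM (D : ℕ → Type) [∀ i, DecidableEq (D i)]
    (M : (i : ℕ) → D i → D (i + 1) → ℕ) (i : ℕ) (b : D i) (c : D (i + 1)) :
    (j : ℕ) → D j → D (j + 1) → ℕ :=
  Function.update M i (fun x y => if x = b ∧ y = c then M i x y + 1 else M i x y)

/-- Delete one copy of the tuple `(b,c)` from relation `i` (0-based). -/
def dropM (D : ℕ → Type) [∀ i, DecidableEq (D i)]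
    (M : (i : ℕ) → D i → D (i + 1) → ℕ) (i : ℕ) (b : D i) (c : D (i + 1)) :
    (j : ℕ) → D j → D (j + 1) → ℕ :=
  Function.update M i (fun x y => if x = b ∧ y = c then M i x y - 1 else M i x y)

section Lemmas

variable (D : ℕ → Type) [∀ i, Fintype (D i)] (M : (i : ℕ) → D i → D (i + 1) → ℕ)

omit [∀ i, Fintype (D i)] in
lemma M_heq {p q : ℕ} (h : p = q) {x : D p} {x' : D q} (hx : HEq x x')
    {y : D (p+1)} {y' : D (q+1)} (hy : HEq y y') : M p x y = M q x' y' := by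
  subst h; rw [eq_of_heq hx, eq_of_heq hy]

omit [∀ i, Fintype (D i)] in
lemma consHG (i k : ℕ) (d : D (i+1)) (u : ∀ j : Fin k, D (i+j.val+1+1))
    (v : ∀ j : Fin k, D (i+1+j.val+1)) (huv : ∀ j, HEq (u j) (v j)) (t : Fin (k+1)) :
    HEq (Fin.cons (α := fun t : Fin (k+1) => D (i+t.val+1)) d u t)
        (Fin.cons (α := fun t : Fin (k+1) => D (i+1+t.val)) d v t) := by
  induction t using Fin.cases with
  | zero => exact HEq.rfl
  | succ s => exact huv s

lemma Qcount_eq_sum_InFn (m : ℕ) : Qcount m D M = ∑ b : D m, InFn D M m b := by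
  rw [Qcount, ← Equiv.sum_comp (Fin.snocEquiv (fun j : Fin (m+1) => D j.val))
      (fun a => ∏ i : Fin m, M i.val (a i.castSucc) (a i.succ)),
    Fintype.sum_prod_type]
  rfl

lemma InFn_succ (i : ℕ) (c : D (i+1)) :
    InFn D M (i+1) c = ∑ b : D i, InFn D M i b * M i b c := by
  rw [InFn, ← Equiv.sum_comp (Fin.snocEquiv (fun j : Fin (i+1) => D j.val))
      (fun a => ∏ j : Fin (i+1), M j.val
        (Fin.snoc (α := fun t : Fin (i + 2) => D t.val) a c j.castSucc)
        (Fin.snoc (α := fun t : Fin (i + 2) => D t.val) a c j.succ)),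
    Fintype.sum_prod_type]
  simp only [InFn, Finset.sum_mul]
  refine Finset.sum_congr rfl fun b _ => Finset.sum_congr rfl fun a _ => ?_
  rw [Fin.prod_univ_castSucc]
  congr 1
  · refine Finset.prod_congr rfl fun j _ => ?_
    simp only [Fin.snocEquiv, Equiv.coe_fn_mk, Fin.snoc_castSucc, Fin.succ_castSucc]
    rfl
  · simp [Fin.snocEquiv, Fin.succ_last]

lemma OutFn_zero (i : ℕ) (c : D i) : OutFn D M i 0 c = 1 := by
  simp [OutFn]

lemma OutFn_succ (i k : ℕ) (c : D i) :
    OutFn D M i (k+1) c = ∑ d : D (i+1), M i c d * OutFn D M (i+1) k d := by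
  rw [OutFn, ← Equiv.sum_comp (Fin.consEquiv (fun j : Fin (k+1) => D (i + j.val + 1)))
      (fun b => ∏ j : Fin (k+1), M (i + j.val)
        (Fin.cons (α := fun t : Fin (k + 2) => D (i + t.val)) c b j.castSucc)
        (Fin.cons (α := fun t : Fin (k + 2) => D (i + t.val)) c b j.succ)),
    Fintype.sum_prod_type]
  refine Finset.sum_congr rfl fun d _ => ?_
  simp only [Fin.consEquiv, Equiv.coe_fn_mk]
  have step : ∀ a : (∀ j : Fin k, D (i + (Fin.succ j).val + 1)),
      (∏ j : Fin (k+1), M (i + j.val)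
        (Fin.cons (α := fun t : Fin (k + 2) => D (i + t.val)) c (Fin.cons d a) j.castSucc)
        (Fin.cons (α := fun t : Fin (k + 2) => D (i + t.val)) c (Fin.cons d a) j.succ))
      = M i c d * ∏ j : Fin k, M (i + j.val + 1)
          (Fin.cons (α := fun t : Fin (k + 1) => D (i + t.val + 1)) d a j.castSucc)
          (Fin.cons (α := fun t : Fin (k + 1) => D (i + t.val + 1)) d a j.succ) := by
    intro a
    rw [Fin.prod_univ_succ]
    congr 1
  rw [Finset.sum_congr rfl (fun a _ => step a), ← Finset.mul_sum]
  congr 1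
  unfold OutFn
  refine Fintype.sum_equiv
    (Equiv.piCongrRight fun j : Fin k =>
      Equiv.cast (congrArg D (by omega : i+(j.val+1)+1 = i+1+j.val+1)))
    _ _ (fun bv => ?_)
  refine Finset.prod_congr rfl fun j _ => ?_
  refine M_heq D M (by omega) ?_ ?_
  · exact consHG D i k d bv _ (fun j => (cast_heq _ _).symm) j.castSucc
  · exact consHG D i k d bv _ (fun j => (cast_heq _ _).symm) j.succ

lemma Qcount_split (m : ℕ) : ∀ k i, i + k = m →
    Qcount m D M = ∑ b : D i, InFn D M i b * OutFn D M i k b := by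
  intro k
  induction k with
  | zero =>
    intro i h
    obtain rfl : i = m := by omega
    simp [OutFn_zero, Qcount_eq_sum_InFn]
  | succ k ih =>
    intro i h
    rw [ih (i+1) (by omega)]
    simp only [InFn_succ, OutFn_succ, Finset.sum_mul, Finset.mul_sum]
    rw [Finset.sum_comm]
    exact Finset.sum_congr rfl fun b _ => Finset.sum_congr rfl fun c _ => by ring

lemma Qcount_mid (m i k : ℕ) (h : i + 1 + k = m) :
    Qcount m D M
      = ∑ c : D (i+1), ∑ b : D i, InFn D M i b * M i b c * OutFn D M (i+1) k c := by
  rw [Qcount_split D M m k (i+1) h]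
  refine Finset.sum_congr rfl fun c _ => ?_
  rw [InFn_succ, Finset.sum_mul]

omit [∀ i, Fintype (D i)] in
lemma bump_ne [∀ i, DecidableEq (D i)] (i j : ℕ) (b : D i) (c : D (i+1)) (hj : j ≠ i) :
    bumpM D M i b c j = M j := Function.update_of_ne hj _ _

omit [∀ i, Fintype (D i)] in
lemma drop_ne [∀ i, DecidableEq (D i)] (i j : ℕ) (b : D i) (c : D (i+1)) (hj : j ≠ i) :
    dropM D M i b c j = M j := Function.update_of_ne hj _ _

lemma InFn_congr (M' : (i : ℕ) → D i → D (i + 1) → ℕ) (i : ℕ)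
    (h : ∀ j, j < i → M j = M' j) (b : D i) : InFn D M i b = InFn D M' i b := by
  rw [InFn, InFn]
  exact Finset.sum_congr rfl fun a _ => Finset.prod_congr rfl fun j _ => by
    rw [h j.val j.isLt]

lemma OutFn_congr (M' : (i : ℕ) → D i → D (i + 1) → ℕ) (i k : ℕ)
    (h : ∀ j, i ≤ j → M j = M' j) (c : D i) : OutFn D M i k c = OutFn D M' i k c := by
  rw [OutFn, OutFn]
  exact Finset.sum_congr rfl fun a _ => Finset.prod_congr rfl fun j _ => by
    rw [h (i + j.val) (Nat.le_add_right _ _)]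


variable [∀ i, DecidableEq (D i)]

lemma Qcount_bump (m i k : ℕ) (h : i + 1 + k = m) (b : D i) (c : D (i+1)) :
    Qcount m D (bumpM D M i b c)
      = Qcount m D M + InFn D M i b * OutFn D M (i+1) k c := by
  rw [Qcount_mid D (bumpM D M i b c) m i k h, Qcount_mid D M m i k h]
  have key : ∀ (c' : D (i+1)) (b' : D i),
      InFn D (bumpM D M i b c) i b' * bumpM D M i b c i b' c'
          * OutFn D (bumpM D M i b c) (i+1) k c'
        = InFn D M i b' * M i b' c' * OutFn D M (i+1) k c'
          + (if b' = b ∧ c' = c then InFn D M i b * OutFn D M (i+1) k c else 0) := by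
    intro c' b'
    rw [← InFn_congr D M (bumpM D M i b c) i
        (fun j hj => (bump_ne D M i j b c (by omega)).symm) b',
      ← OutFn_congr D M (bumpM D M i b c) (i+1) k
        (fun j hj => (bump_ne D M i j b c (by omega)).symm) c']
    rw [show bumpM D M i b c i
        = fun x y => if x = b ∧ y = c then M i x y + 1 else M i x y from
      Function.update_self _ _ _]
    by_cases hp : b' = b ∧ c' = c
    · obtain ⟨rfl, rfl⟩ := hp
      simp only [and_self, if_true]
      ring
    · simp [hp]
  simp only [key, Finset.sum_add_distrib]
  congr 1
  simp [ite_and, Finset.sum_ite_eq']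

lemma Qcount_drop (m i k : ℕ) (h : i + 1 + k = m) (b : D i) (c : D (i+1))
    (hpos : 1 ≤ M i b c) :
    Qcount m D M
      = Qcount m D (dropM D M i b c) + InFn D M i b * OutFn D M (i+1) k c := by
  rw [Qcount_mid D (dropM D M i b c) m i k h, Qcount_mid D M m i k h]
  have key : ∀ (c' : D (i+1)) (b' : D i),
      InFn D M i b' * M i b' c' * OutFn D M (i+1) k c'
        = InFn D (dropM D M i b c) i b' * dropM D M i b c i b' c'
            * OutFn D (dropM D M i b c) (i+1) k c'
          + (if b' = b ∧ c' = c then InFn D M i b * OutFn D M (i+1) k c else 0) := by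
    intro c' b'
    rw [← InFn_congr D M (dropM D M i b c) i
        (fun j hj => (drop_ne D M i j b c (by omega)).symm) b',
      ← OutFn_congr D M (dropM D M i b c) (i+1) k
        (fun j hj => (drop_ne D M i j b c (by omega)).symm) c']
    rw [show dropM D M i b c i
        = fun x y => if x = b ∧ y = c then M i x y - 1 else M i x y from
      Function.update_self _ _ _]
    by_cases hp : b' = b ∧ c' = c
    · obtain ⟨rfl, rfl⟩ := hp
      simp only [and_self, if_true]
      obtain ⟨n, hn⟩ : ∃ n, M i b' c' = n + 1 := ⟨M i b' c' - 1, by omega⟩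
      rw [hn, Nat.add_sub_cancel]
      ring
    · simp [hp]
  simp only [key, Finset.sum_add_distrib]
  congr 1
  simp [ite_and, Finset.sum_ite_eq']

omit [∀ i, Fintype (D i)] in
lemma drop_eq_self (i : ℕ) (b : D i) (c : D (i+1)) (h0 : M i b c = 0) :
    dropM D M i b c = M := by
  rw [dropM, show (fun x y => if x = b ∧ y = c then M i x y - 1 else M i x y) = M i from ?_,
    Function.update_eq_self]
  funext x y
  by_cases hp : x = b ∧ y = c
  · obtain ⟨rfl, rfl⟩ := hp
    simp [h0]
  · simp [hp]

lemma sup_mul_sup {α β : Type} [Fintype α] [Fintype β] [Nonempty α] [Nonempty β]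
    (f : α → ℕ) (g : β → ℕ) :
    (univ.sup fun p : α × β => f p.1 * g p.2) = univ.sup f * univ.sup g := by
  apply le_antisymm
  · exact Finset.sup_le fun p _ =>
      Nat.mul_le_mul (Finset.le_sup (mem_univ p.1)) (Finset.le_sup (mem_univ p.2))
  · obtain ⟨a, -, ha⟩ := Finset.exists_mem_eq_sup univ univ_nonempty f
    obtain ⟨b, -, hb⟩ := Finset.exists_mem_eq_sup univ univ_nonempty g
    rw [ha, hb]
    exact Finset.le_sup (f := fun p : α × β => f p.1 * g p.2) (mem_univ (a, b))

end Lemmas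


/-- correctness of the path-join local-sensitivity algorithm.  The local
sensitivity `LS` — the maximum over all relations `i` and all pairs `(b,c) ∈ Σ_{i-1}×Σ_i`
of `max(δ⁺(b,c,i), δ⁻(b,c,i))`, where `δ⁺` is the increase of the output count caused by
incrementing `M_i b c` and `δ⁻` the decrease caused by decrementing it (`0` when
`M_i b c = 0`, which is what truncated `ℕ`-subtraction yields) — equals
`max_i (max_b In_i(b)) · (max_c Out_i(c))`. -/
theorem path_local_sensitivity_algorithm_correct
    (m : ℕ) (hm : 1 ≤ m) (D : ℕ → Type)
    [∀ i, Fintype (D i)] [∀ i, Nonempty (D i)] [∀ i, DecidableEq (D i)]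
    (M : (i : ℕ) → D i → D (i + 1) → ℕ) :
    (Finset.univ.sup fun i : Fin m =>
        Finset.univ.sup fun bc : D i.val × D (i.val + 1) =>
          max (Qcount m D (bumpM D M i.val bc.1 bc.2) - Qcount m D M)
            (Qcount m D M - Qcount m D (dropM D M i.val bc.1 bc.2)))
      = Finset.univ.sup fun i : Fin m =>
          (Finset.univ.sup fun b : D i.val => InFn D M i.val b)
            * Finset.univ.sup fun c : D (i.val + 1) =>
                OutFn D M (i.val + 1) (m - (i.val + 1)) c := by
  refine Finset.sup_congr rfl fun i _ => ?_
  have hik : i.val + 1 + (m - (i.val + 1)) = m := by omega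
  have hmax : ∀ bc : D i.val × D (i.val + 1),
      max (Qcount m D (bumpM D M i.val bc.1 bc.2) - Qcount m D M)
          (Qcount m D M - Qcount m D (dropM D M i.val bc.1 bc.2))
        = InFn D M i.val bc.1 * OutFn D M (i.val + 1) (m - (i.val + 1)) bc.2 := by
    intro bc
    have h1 : Qcount m D (bumpM D M i.val bc.1 bc.2) - Qcount m D M
        = InFn D M i.val bc.1 * OutFn D M (i.val + 1) (m - (i.val + 1)) bc.2 := by
      rw [Qcount_bump D M m i.val (m - (i.val + 1)) hik bc.1 bc.2]
      omega
    have h2 : Qcount m D M - Qcount m D (dropM D M i.val bc.1 bc.2)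
        ≤ InFn D M i.val bc.1 * OutFn D M (i.val + 1) (m - (i.val + 1)) bc.2 := by
      by_cases hp : M i.val bc.1 bc.2 = 0
      · rw [drop_eq_self D M i.val bc.1 bc.2 hp]
        simp
      · rw [Qcount_drop D M m i.val (m - (i.val + 1)) hik bc.1 bc.2 (by omega)]
        omega
    rw [h1]
    exact max_eq_left h2
  rw [Finset.sup_congr rfl fun bc _ => hmax bc]
  exact sup_mul_sup _ _
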